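/- Among all n-point sets in the plane with n−1 points collinear (the maximum allowed collinearity), the number of non-degenerate triangles formed by triples of points equals C(n−1, 2) = (n−1)(n−2)/2; among point sets with no three collinear it equals C(n,3) = n(n−1)(n−2)/6, and these are respectively the minimum and maximum over all plane point sets of n points not all collinear. -/
import Mathlib

open Classical

local notation "Pt" => EuclideanSpace ℝ (Fin 2)

lemma collinear_of_forall_mem_line {a b : Pt} {s : Set Pt}
    (h : ∀ x ∈ s, x ∈ line[ℝ, a, b]) : Collinear ℝ s := by
  rw [collinear_iff_exists_forall_eq_smul_vadd]
  refine ⟨a, b -ᵥ a, fun p hp => ?_⟩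
  have hm := h p hp
  have hp' : (p -ᵥ a) +ᵥ a ∈ line[ℝ, a, b] := by simpa using hm
  rw [vadd_left_mem_affineSpan_pair] at hp'
  obtain ⟨r, hr⟩ := hp'
  exact ⟨r, by rw [hr]; simp⟩

lemma card_ge_three {S : Finset Pt} (h : ¬Collinear ℝ (S : Set Pt)) : 3 ≤ S.card := by
  by_contra hlt
  push_neg at hlt
  interval_cases hc : S.card
  · rw [Finset.card_eq_zero.mp hc] at h; simp [collinear_empty] at h
  · obtain ⟨a, rfl⟩ := Finset.card_eq_one.mp hc
    simp [collinear_singleton] at h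
  · obtain ⟨a, b, _, rfl⟩ := Finset.card_eq_two.mp hc
    simp [collinear_pair] at h

open Classical in
/-- For a set `S` of `n` points in the plane, not all collinear: if `n−1` of the points
are collinear then the number of non-collinear triples equals `C(n−1,2)`; if no three
points are collinear it equals `C(n,3)`; and in general the count lies between these
two values. -/
theorem count_nondegenerate_triangles (n : ℕ) (S : Finset (EuclideanSpace ℝ (Fin 2)))
    (hcard : S.card = n)
    (hncol : ¬ Collinear ℝ (S : Set (EuclideanSpace ℝ (Fin 2)))) :
    ((∃ T : Finset (EuclideanSpace ℝ (Fin 2)), T ⊆ S ∧ T.card = n - 1 ∧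
        Collinear ℝ (T : Set (EuclideanSpace ℝ (Fin 2)))) →
      ((S.powersetCard 3).filter
        (fun T => ¬ Collinear ℝ (T : Set (EuclideanSpace ℝ (Fin 2))))).card
        = Nat.choose (n - 1) 2) ∧
    ((∀ T : Finset (EuclideanSpace ℝ (Fin 2)), T ⊆ S → T.card = 3 →
        ¬ Collinear ℝ (T : Set (EuclideanSpace ℝ (Fin 2)))) →
      ((S.powersetCard 3).filter
        (fun T => ¬ Collinear ℝ (T : Set (EuclideanSpace ℝ (Fin 2))))).card
        = Nat.choose n 3) ∧
    (Nat.choose (n - 1) 2 ≤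
      ((S.powersetCard 3).filter
        (fun T => ¬ Collinear ℝ (T : Set (EuclideanSpace ℝ (Fin 2))))).card ∧
      ((S.powersetCard 3).filter
        (fun T => ¬ Collinear ℝ (T : Set (EuclideanSpace ℝ (Fin 2))))).card
        ≤ Nat.choose n 3) := by
  classical
  have h3 : 3 ≤ n := hcard ▸ card_ge_three hncol
  have hEq : (Finset.filter (fun T : Set Pt => ¬ Collinear ℝ T)
      (do let a ← S.powersetCard 3; pure ((a : Finset Pt) : Set Pt))).card
      = ((S.powersetCard 3).filter (fun U : Finset Pt => ¬ Collinear ℝ (↑U : Set Pt))).card := by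
    rw [bind_pure_comp, Finset.fmap_def, Finset.filter_image]
    apply Finset.card_image_of_injOn
    intro x _ y _ h
    exact Finset.coe_injective h
  rw [hEq]
  refine ⟨?_, ?_, ?_, ?_⟩
  · -- Part 1
    rintro ⟨T, hTS, hTcard, hTcol⟩
    have hsd : (S \ T).card = 1 := by
      rw [Finset.card_sdiff_of_subset hTS, hcard, hTcard]; omega
    obtain ⟨p, hp⟩ := Finset.card_eq_one.mp hsd
    have hpmem : p ∈ S \ T := hp ▸ Finset.mem_singleton_self p
    have hpS : p ∈ S := (Finset.mem_sdiff.mp hpmem).1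
    have hpT : p ∉ T := (Finset.mem_sdiff.mp hpmem).2
    have hS : ∀ x ∈ S, x ∉ T → x = p := by
      intro x hx hxT
      have : x ∈ S \ T := Finset.mem_sdiff.mpr ⟨hx, hxT⟩
      rw [hp] at this; exact Finset.mem_singleton.mp this
    have key : ∀ A : Finset Pt, A ⊆ T → A.card = 2 →
        ¬ Collinear ℝ ((insert p A : Finset Pt) : Set Pt) := by
      intro A hAT hA2 hcol
      obtain ⟨a, b, hab, rfl⟩ := Finset.card_eq_two.mp hA2
      have haT : a ∈ T := hAT (by simp)
      have hbT : b ∈ T := hAT (by simp)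
      have hcol' : Collinear ℝ ({p, a, b} : Set Pt) := by
        simpa using hcol
      have : Collinear ℝ (insert p (T : Set Pt)) :=
        (hTcol.collinear_insert_iff_of_ne haT hbT hab).mpr hcol'
      apply hncol
      refine this.subset ?_
      intro x hx
      by_cases hxT : x ∈ T
      · exact Set.mem_insert_of_mem _ hxT
      · have : x = p := hS x hx hxT
        simp [this]
    have himg : (S.powersetCard 3).filter
        (fun U => ¬ Collinear ℝ ((U : Finset Pt) : Set Pt))
        = (T.powersetCard 2).image (insert p) := by
      ext U
      simp only [Finset.mem_filter, Finset.mem_powersetCard, Finset.mem_image]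
      constructor
      · rintro ⟨⟨hUS, hU3⟩, hUnc⟩
        have hpU : p ∈ U := by
          by_contra hpU
          apply hUnc
          refine hTcol.subset ?_
          intro x hx
          have hxU : x ∈ U := by exact_mod_cast hx
          have hxS : x ∈ S := hUS hxU
          by_cases hxT : x ∈ T
          · exact_mod_cast hxT
          · exact absurd ((hS x hxS hxT) ▸ hxU) hpU
        refine ⟨U.erase p, ⟨?_, ?_⟩, ?_⟩
        · intro x hx
          have hxU : x ∈ U := Finset.mem_of_mem_erase hx
          have hxp : x ≠ p := Finset.ne_of_mem_erase hx
          by_cases hxT : x ∈ T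
          · exact hxT
          · exact absurd (hS x (hUS hxU) hxT) hxp
        · rw [Finset.card_erase_of_mem hpU, hU3]
        · exact Finset.insert_erase hpU
      · rintro ⟨A, ⟨hAT, hA2⟩, rfl⟩
        have hpA : p ∉ A := fun h => hpT (hAT h)
        refine ⟨⟨?_, ?_⟩, key A hAT hA2⟩
        · exact Finset.insert_subset hpS (hAT.trans hTS)
        · rw [Finset.card_insert_of_notMem hpA, hA2]
    rw [himg, Finset.card_image_of_injOn, Finset.card_powersetCard, hTcard]
    intro A₁ h₁ A₂ h₂ heq
    rw [Finset.mem_coe, Finset.mem_powersetCard] at h₁ h₂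
    have hp₁ : p ∉ A₁ := fun h => hpT (h₁.1 h)
    have hp₂ : p ∉ A₂ := fun h => hpT (h₂.1 h)
    rw [← Finset.erase_insert hp₁, ← Finset.erase_insert hp₂, heq]
  · -- Part 2
    intro hall
    rw [Finset.filter_true_of_mem, Finset.card_powersetCard, hcard]
    intro U hU
    rw [Finset.mem_powersetCard] at hU
    exact hall U hU.1 hU.2
  · -- Part 3 lower bound
    have hne : S.Nonempty := Finset.card_pos.mp (by omega)
    obtain ⟨p, hpS⟩ := hne
    have hErase : (S.erase p).card = n - 1 := by
      rw [Finset.card_erase_of_mem hpS, hcard]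
    -- existence of a witness point for every pair
    have hex : ∀ A : Finset Pt, A ⊆ S.erase p → A.card = 2 →
        ∃ c ∈ S, ¬ Collinear ℝ ((insert c A : Finset Pt) : Set Pt) := by
      intro A hA hA2
      by_contra hc
      push_neg at hc
      obtain ⟨a, b, hab, rfl⟩ := Finset.card_eq_two.mp hA2
      apply hncol
      apply collinear_of_forall_mem_line (a := a) (b := b)
      intro x hx
      have hxS : x ∈ S := by exact_mod_cast hx
      have hcol : Collinear ℝ ({x, a, b} : Set Pt) := by
        have := hc x hxS
        simpa using this
      exact hcol.mem_affineSpan_of_mem_of_ne (by simp) (by simp) (by simp) hab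
    set f : Finset Pt → Finset Pt := fun A =>
      if Collinear ℝ ((insert p A : Finset Pt) : Set Pt) then
        if h : ∃ c ∈ S, ¬ Collinear ℝ ((insert c A : Finset Pt) : Set Pt) then
          insert h.choose A
        else A
      else insert p A with hf
    have hfprop : ∀ A : Finset Pt, A ⊆ S.erase p → A.card = 2 →
        (f A ⊆ S ∧ (f A).card = 3 ∧ ¬ Collinear ℝ ((f A : Finset Pt) : Set Pt) ∧
          (Collinear ℝ ((insert p A : Finset Pt) : Set Pt) → p ∉ f A ∧ A ⊆ f A) ∧
          (¬ Collinear ℝ ((insert p A : Finset Pt) : Set Pt) → f A = insert p A)) := by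
      intro A hA hA2
      have hAS : A ⊆ S := hA.trans (Finset.erase_subset _ _)
      have hpA : p ∉ A := fun h => (Finset.ne_of_mem_erase (hA h)) rfl
      have hAcol : Collinear ℝ ((A : Finset Pt) : Set Pt) := by
        obtain ⟨a, b, hab, rfl⟩ := Finset.card_eq_two.mp hA2
        simpa using collinear_pair ℝ a b
      by_cases hcol : Collinear ℝ ((insert p A : Finset Pt) : Set Pt)
      · have hexA := hex A hA hA2
        have hfA : f A = insert hexA.choose A := by
          rw [hf]; simp only [hcol, if_true, dif_pos hexA]
        obtain ⟨hcS, hcnc⟩ := hexA.choose_spec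
        have hcA : hexA.choose ∉ A := by
          intro h
          apply hcnc
          rw [Finset.insert_eq_self.mpr h]
          exact hAcol
        have hcp : hexA.choose ≠ p := by
          intro h; rw [h] at hcnc; exact hcnc hcol
        refine ⟨?_, ?_, ?_, ?_, fun h => absurd hcol h⟩
        · rw [hfA]; exact Finset.insert_subset hcS hAS
        · rw [hfA, Finset.card_insert_of_notMem hcA, hA2]
        · rw [hfA]; exact hcnc
        · intro _
          constructor
          · rw [hfA]
            simp only [Finset.mem_insert]
            rintro (h | h)
            · exact hcp h.symm
            · exact hpA h
          · rw [hfA]; exact Finset.subset_insert _ _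
      · have hfA : f A = insert p A := by rw [hf]; simp only [hcol, if_false]
        refine ⟨?_, ?_, ?_, fun h => absurd h hcol, fun _ => hfA⟩
        · rw [hfA]; exact Finset.insert_subset hpS hAS
        · rw [hfA, Finset.card_insert_of_notMem hpA, hA2]
        · rw [hfA]; exact hcol
    have hmaps : ∀ A ∈ (S.erase p).powersetCard 2,
        f A ∈ (S.powersetCard 3).filter
          (fun U => ¬ Collinear ℝ ((U : Finset Pt) : Set Pt)) := by
      intro A hA
      rw [Finset.mem_powersetCard] at hA
      obtain ⟨h1, h2, h3', _⟩ := hfprop A hA.1 hA.2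
      rw [Finset.mem_filter, Finset.mem_powersetCard]
      exact ⟨⟨h1, h2⟩, h3'⟩
    have hinj : Set.InjOn f ((S.erase p).powersetCard 2 : Finset (Finset Pt)) := by
      intro A₁ h₁ A₂ h₂ heq
      rw [Finset.mem_coe, Finset.mem_powersetCard] at h₁ h₂
      obtain ⟨hS1, hc1, hnc1, hcase1, hncase1⟩ := hfprop A₁ h₁.1 h₁.2
      obtain ⟨hS2, hc2, hnc2, hcase2, hncase2⟩ := hfprop A₂ h₂.1 h₂.2
      by_cases hcolA1 : Collinear ℝ ((insert p A₁ : Finset Pt) : Set Pt) <;>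
        by_cases hcolA2 : Collinear ℝ ((insert p A₂ : Finset Pt) : Set Pt)
      · -- both collinear with p
        obtain ⟨hp1, hsub1⟩ := hcase1 hcolA1
        obtain ⟨hp2, hsub2⟩ := hcase2 hcolA2
        by_contra hne
        -- intersection has exactly one element
        have hint : (A₁ ∩ A₂).card ≤ 2 := le_trans (Finset.card_le_card
          (Finset.inter_subset_left)) (le_of_eq h₁.2)
        have hintne2 : (A₁ ∩ A₂).card ≠ 2 := by
          intro h
          apply hne
          have e1 : A₁ ∩ A₂ = A₁ := Finset.eq_of_subset_of_card_le
            Finset.inter_subset_left (by omega)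
          have e2 : A₁ ∩ A₂ = A₂ := Finset.eq_of_subset_of_card_le
            Finset.inter_subset_right (by rw [h₂.2, h])
          rw [← e1, e2]
        have hunion : A₁ ∪ A₂ ⊆ f A₁ := by
          rw [Finset.union_subset_iff]; exact ⟨hsub1, heq ▸ hsub2⟩
        have hcardu : (A₁ ∪ A₂).card ≤ 3 := le_trans (Finset.card_le_card hunion)
          (le_of_eq hc1)
        have hcardiu : (A₁ ∪ A₂).card + (A₁ ∩ A₂).card = 4 := by
          rw [Finset.card_union_add_card_inter, h₁.2, h₂.2]
        have hint1 : (A₁ ∩ A₂).card = 1 := by omega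
        obtain ⟨a, ha⟩ := Finset.card_eq_one.mp hint1
        have haA1 : a ∈ A₁ := Finset.mem_of_mem_inter_left (ha ▸ Finset.mem_singleton_self a)
        have haA2 : a ∈ A₂ := Finset.mem_of_mem_inter_right (ha ▸ Finset.mem_singleton_self a)
        have hap : a ≠ p := Finset.ne_of_mem_erase (h₁.1 haA1)
        have hUeq : A₁ ∪ A₂ = f A₁ := Finset.eq_of_subset_of_card_le hunion (by omega)
        apply hnc1
        apply collinear_of_forall_mem_line (a := p) (b := a)
        intro x hx
        have hxU : x ∈ A₁ ∪ A₂ := by rw [hUeq]; exact_mod_cast hx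
        rw [Finset.mem_union] at hxU
        rcases hxU with hx1 | hx2
        · have := hcolA1.mem_affineSpan_of_mem_of_ne
            (p₁ := p) (p₂ := a) (p₃ := x) (by simp) (by simp [haA1]) (by simp [hx1])
            (Ne.symm hap)
          exact this
        · have := hcolA2.mem_affineSpan_of_mem_of_ne
            (p₁ := p) (p₂ := a) (p₃ := x) (by simp) (by simp [haA2]) (by simp [hx2])
            (Ne.symm hap)
          exact this
      · -- mixed
        obtain ⟨hp1, _⟩ := hcase1 hcolA1
        have := hncase2 hcolA2
        rw [this] at heq
        exact absurd (heq ▸ Finset.mem_insert_self p A₂) hp1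
      · obtain ⟨hp2, _⟩ := hcase2 hcolA2
        have := hncase1 hcolA1
        rw [this] at heq
        exact absurd (heq ▸ Finset.mem_insert_self p A₁) hp2
      · have e1 := hncase1 hcolA1
        have e2 := hncase2 hcolA2
        rw [e1, e2] at heq
        have hpA1 : p ∉ A₁ := fun h => (Finset.ne_of_mem_erase (h₁.1 h)) rfl
        have hpA2 : p ∉ A₂ := fun h => (Finset.ne_of_mem_erase (h₂.1 h)) rfl
        rw [← Finset.erase_insert hpA1, ← Finset.erase_insert hpA2, heq]
    calc Nat.choose (n - 1) 2 = ((S.erase p).powersetCard 2).card := by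
            rw [Finset.card_powersetCard, hErase]
      _ ≤ _ := Finset.card_le_card_of_injOn f hmaps hinj
  · -- Part 3 upper bound
    calc ((S.powersetCard 3).filter
          (fun U => ¬ Collinear ℝ ((U : Finset Pt) : Set Pt))).card
        ≤ (S.powersetCard 3).card := Finset.card_filter_le _ _
      _ = Nat.choose n 3 := by rw [Finset.card_powersetCard, hcard]
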